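/- Let f(x) := sin x + sin 2x. Then the transformed covariance satisfies τ(f,f) = sinh(4·σij)·e^{−2(σii+σjj)} + sinh(2·σij)·e^{−(2σii + σjj/2)} + sinh(2·σij)·e^{−(σii/2 + 2σjj)} + sinh(σij)·e^{−(σii+σjj)/2}. -/

import Mathlib

open MeasureTheory Real

/-- Centered bivariate Gaussian density with covariance entries `σii, σjj, σij`. -/
noncomputable def gaussPDF2 (σii σjj σij : ℝ) (x w : ℝ) : ℝ :=
  (1 / (2 * π * Real.sqrt (σii * σjj - σij ^ 2))) *
    Real.exp (-(σjj * x ^ 2 - 2 * σij * x * w + σii * w ^ 2) / (2 * (σii * σjj - σij ^ 2)))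

/-- Centered univariate Gaussian density with variance `σ`. -/
noncomputable def gaussPDF1 (σ x : ℝ) : ℝ :=
  (1 / Real.sqrt (2 * π * σ)) * Real.exp (-x ^ 2 / (2 * σ))

/-- Transformed mean `ν(f)`. -/
noncomputable def transMean (σ : ℝ) (f : ℝ → ℝ) : ℝ := ∫ x : ℝ, f x * gaussPDF1 σ x

/-- Transformed covariance `τ(f, g)`. -/
noncomputable def transCov (σii σjj σij : ℝ) (f g : ℝ → ℝ) : ℝ :=
  (∫ q : ℝ × ℝ, f q.1 * g q.2 * gaussPDF2 σii σjj σij q.1 q.2) -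
    transMean σii f * transMean σjj g

/- ### Auxiliary lemmas -/

lemma gauss1_integrable {s : ℝ} (hs : 0 < s) : Integrable (gaussPDF1 s) := by
  unfold gaussPDF1
  apply Integrable.const_mul
  have : ∀ x : ℝ, Real.exp (-x ^ 2 / (2 * s)) = Real.exp (-(1/(2*s)) * x ^ 2) := by
    intro x; ring_nf
  simp_rw [this]
  exact integrable_exp_neg_mul_sq (by positivity)

lemma gauss1_cont (s : ℝ) : Continuous (gaussPDF1 s) := by
  unfold gaussPDF1; fun_prop

lemma gauss1_nonneg (s x : ℝ) : 0 ≤ gaussPDF1 s x := by unfold gaussPDF1; positivity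

lemma abs_sin_le_one' (y : ℝ) : |Real.sin y| ≤ 1 :=
  abs_le.mpr ⟨Real.neg_one_le_sin y, Real.sin_le_one y⟩

lemma integrable_mul_gauss {s : ℝ} (hs : 0 < s) {f : ℝ → ℝ} (hf : Continuous f)
    (hbd : ∀ x, |f x| ≤ 2) : Integrable (fun x => f x * gaussPDF1 s x) := by
  apply Integrable.mono (g := fun x => 2 * gaussPDF1 s x) ((gauss1_integrable hs).const_mul 2)
    (by exact (hf.mul (gauss1_cont s)).aestronglyMeasurable)
  filter_upwards with x
  rw [norm_mul]
  have h0 : 0 ≤ gaussPDF1 s x := gauss1_nonneg s x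
  rw [norm_of_nonneg h0, Real.norm_eq_abs]
  calc |f x| * gaussPDF1 s x ≤ 2 * gaussPDF1 s x := by
        apply mul_le_mul_of_nonneg_right (hbd x) h0
    _ ≤ ‖2 * gaussPDF1 s x‖ := le_abs_self _

lemma integrable_sin_mul_gauss {s : ℝ} (hs : 0 < s) (c : ℝ) :
    Integrable (fun x => Real.sin (c * x) * gaussPDF1 s x) :=
  integrable_mul_gauss hs (by continuity) (fun x => (abs_sin_le_one' _).trans one_le_two)

lemma integrable_cos_mul_gauss {s : ℝ} (hs : 0 < s) (c : ℝ) :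
    Integrable (fun x => Real.cos (c * x) * gaussPDF1 s x) :=
  integrable_mul_gauss hs (by continuity) (fun x => (Real.abs_cos_le_one _).trans one_le_two)

lemma integrable_sin_sin_gauss {s : ℝ} (hs : 0 < s) (a c : ℝ) :
    Integrable (fun x => Real.sin (a * x) * Real.sin (c * x) * gaussPDF1 s x) := by
  apply integrable_mul_gauss hs (by continuity)
  intro x
  rw [abs_mul]
  calc |Real.sin (a*x)| * |Real.sin (c*x)| ≤ 1 * 1 :=
        mul_le_mul (abs_sin_le_one' _) (abs_sin_le_one' _) (abs_nonneg _) zero_le_one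
    _ ≤ 2 := by norm_num

lemma integral_cos_gauss {s : ℝ} (hs : 0 < s) (c : ℝ) :
    ∫ x : ℝ, Real.cos (c * x) * gaussPDF1 s x = Real.exp (-c ^ 2 * s / 2) := by
  have hb : ((-(1/(2*s)) : ℂ)).re < 0 := by
    simp; positivity
  have key := integral_cexp_quadratic hb (c * Complex.I) 0
  have hre : ∀ x : ℝ, (Complex.exp ((-(1/(2*s)) : ℂ) * x ^ 2 + (c * Complex.I) * x + 0)).re
      = Real.exp (-x ^ 2 / (2 * s)) * Real.cos (c * x) := by
    intro x
    rw [Complex.exp_re]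
    congr 2
    · simp [Complex.add_re, Complex.mul_re, ← Complex.ofReal_pow]
      ring
    · simp [Complex.add_im, Complex.mul_im, ← Complex.ofReal_pow]
  have hint := integrable_cexp_quadratic' hb (c * Complex.I) 0
  have hL := integral_re hint
  simp only [RCLike.re_to_complex] at hL
  simp_rw [hre] at hL
  have hπs : (0:ℝ) ≤ 2 * π * s := by positivity
  have hRHS : ((↑π / -(-(1/(2*s)) : ℂ)) ^ (1 / 2 : ℂ) *
      Complex.exp (0 - (c * Complex.I) ^ 2 / (4 * (-(1/(2*s)) : ℂ)))).re
      = Real.sqrt (2 * π * s) * Real.exp (-c ^ 2 * s / 2) := by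
    have h1 : ((π : ℂ) / -(-(1/(2*s)) : ℂ)) = ((2 * π * s : ℝ) : ℂ) := by
      push_cast
      field_simp
    have h2 : (0 - ((c : ℂ) * Complex.I) ^ 2 / (4 * (-(1/(2*s)) : ℂ))) = ((-c ^ 2 * s / 2 : ℝ) : ℂ) := by
      have hs' : (s:ℂ) ≠ 0 := by exact_mod_cast hs.ne'
      field_simp
      ring_nf
      rw [Complex.I_sq]
      ring
      push_cast; ring
    rw [h1, h2]
    rw [show (1/2 : ℂ) = ((1/2 : ℝ) : ℂ) by norm_num]
    rw [← Complex.ofReal_cpow hπs, ← Complex.ofReal_exp, ← Complex.ofReal_mul, Complex.ofReal_re]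
    rw [← Real.sqrt_eq_rpow]
  rw [key, hRHS] at hL
  unfold gaussPDF1
  have hsq : Real.sqrt (2 * π * s) ≠ 0 := by positivity
  calc ∫ x : ℝ, Real.cos (c * x) * ((1 / Real.sqrt (2 * π * s)) * Real.exp (-x ^ 2 / (2 * s)))
      = (1 / Real.sqrt (2 * π * s)) * ∫ x : ℝ, Real.exp (-x ^ 2 / (2 * s)) * Real.cos (c * x) := by
        rw [← integral_const_mul]; congr 1; ext x; ring
    _ = Real.exp (-c ^ 2 * s / 2) := by rw [hL]; field_simp

lemma integral_sin_gauss {s : ℝ} (hs : 0 < s) (c : ℝ) :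
    ∫ x : ℝ, Real.sin (c * x) * gaussPDF1 s x = 0 := by
  have h := MeasureTheory.integral_neg_eq_self (fun x : ℝ => Real.sin (c * x) * gaussPDF1 s x) volume
  have heq : ∀ x : ℝ, Real.sin (c * -x) * gaussPDF1 s (-x) = -(Real.sin (c * x) * gaussPDF1 s x) := by
    intro x
    unfold gaussPDF1
    rw [show c * -x = -(c * x) by ring, Real.sin_neg, neg_sq]
    ring
  simp_rw [heq] at h
  rw [integral_neg] at h
  linarith

lemma integral_sin_shift_gauss {s : ℝ} (hs : 0 < s) (b μ : ℝ) :
    ∫ w : ℝ, Real.sin (b * w) * gaussPDF1 s (w - μ) = Real.sin (b * μ) * Real.exp (-b ^ 2 * s / 2) := by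
  have h := MeasureTheory.integral_add_right_eq_self (μ := volume)
    (fun w : ℝ => Real.sin (b * w) * gaussPDF1 s (w - μ)) μ
  rw [← h]
  have heq : ∀ w : ℝ, Real.sin (b * (w + μ)) * gaussPDF1 s (w + μ - μ)
      = Real.cos (b * μ) * (Real.sin (b * w) * gaussPDF1 s w)
        + Real.sin (b * μ) * (Real.cos (b * w) * gaussPDF1 s w) := by
    intro w
    rw [add_sub_cancel_right, show b * (w + μ) = b * w + b * μ by ring, Real.sin_add]
    ring
  simp_rw [heq]
  rw [MeasureTheory.integral_add ((integrable_sin_mul_gauss hs b).const_mul _)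
    ((integrable_cos_mul_gauss hs b).const_mul _), integral_const_mul, integral_const_mul,
    integral_sin_gauss hs, integral_cos_gauss hs]
  ring

lemma integrable_sin_shift_gauss {s : ℝ} (hs : 0 < s) (b μ : ℝ) :
    Integrable (fun w => Real.sin (b * w) * gaussPDF1 s (w - μ)) := by
  apply Integrable.mono (g := fun w => 2 * gaussPDF1 s (w - μ))
    (((gauss1_integrable hs).comp_sub_right μ).const_mul 2)
  · apply Continuous.aestronglyMeasurable
    exact (Real.continuous_sin.comp (continuous_const.mul continuous_id)).mul
      ((gauss1_cont s).comp (continuous_id.sub continuous_const))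
  · filter_upwards with w
    rw [norm_mul, Real.norm_eq_abs, norm_of_nonneg (gauss1_nonneg _ _)]
    calc |Real.sin (b*w)| * gaussPDF1 s (w - μ) ≤ 2 * gaussPDF1 s (w - μ) :=
          mul_le_mul_of_nonneg_right ((abs_sin_le_one' _).trans one_le_two) (gauss1_nonneg _ _)
      _ ≤ ‖2 * gaussPDF1 s (w - μ)‖ := le_abs_self _

lemma integral_sin_mul_sin_gauss {s : ℝ} (hs : 0 < s) (a c : ℝ) :
    ∫ x : ℝ, Real.sin (a * x) * Real.sin (c * x) * gaussPDF1 s x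
      = (Real.exp (-(a - c) ^ 2 * s / 2) - Real.exp (-(a + c) ^ 2 * s / 2)) / 2 := by
  have heq : ∀ x : ℝ, Real.sin (a * x) * Real.sin (c * x) * gaussPDF1 s x
      = (1/2 : ℝ) * (Real.cos ((a - c) * x) * gaussPDF1 s x)
        - (1/2 : ℝ) * (Real.cos ((a + c) * x) * gaussPDF1 s x) := by
    intro x
    have h1 : (a - c) * x = a * x - c * x := by ring
    have h2 : (a + c) * x = a * x + c * x := by ring
    rw [h1, h2, Real.cos_sub, Real.cos_add]
    ring
  simp_rw [heq]
  rw [MeasureTheory.integral_sub ((integrable_cos_mul_gauss hs _).const_mul _)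
    ((integrable_cos_mul_gauss hs _).const_mul _), integral_const_mul, integral_const_mul,
    integral_cos_gauss hs, integral_cos_gauss hs]
  ring

lemma gauss2_factor {σii σjj σij : ℝ} (hii : 0 < σii) (hd : 0 < σii * σjj - σij ^ 2)
    (x w : ℝ) :
    gaussPDF2 σii σjj σij x w
      = gaussPDF1 σii x * gaussPDF1 ((σii * σjj - σij ^ 2) / σii) (w - (σij / σii) * x) := by
  unfold gaussPDF1 gaussPDF2
  have hπ : (0:ℝ) < π := Real.pi_pos
  have hpre : 1 / (2 * π * Real.sqrt (σii * σjj - σij ^ 2))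
      = 1 / Real.sqrt (2 * π * σii) * (1 / Real.sqrt (2 * π * ((σii * σjj - σij ^ 2) / σii))) := by
    rw [div_mul_div_comm, one_mul, ← Real.sqrt_mul (by positivity)]
    congr 1
    rw [show 2 * π * σii * (2 * π * ((σii * σjj - σij ^ 2) / σii)) = (2*π)^2 * (σii * σjj - σij ^ 2) by
      field_simp]
    rw [Real.sqrt_mul (by positivity), Real.sqrt_sq (by positivity)]
  rw [hpre]
  have hexp : -(σjj * x ^ 2 - 2 * σij * x * w + σii * w ^ 2) / (2 * (σii * σjj - σij ^ 2))
      = -x ^ 2 / (2 * σii) + -(w - σij / σii * x) ^ 2 / (2 * ((σii * σjj - σij ^ 2) / σii)) := by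
    have hne : σii * σjj - σij ^ 2 ≠ 0 := hd.ne'
    have hinv : (σii * σjj - σij ^ 2) * (σii * σjj - σij ^ 2)⁻¹ = 1 := mul_inv_cancel₀ hne
    field_simp
    linear_combination (-x ^ 2) * hinv
  rw [hexp, Real.exp_add]
  ring

lemma gauss2_prod_integrable {σii s m : ℝ} (hii : 0 < σii) (hs : 0 < s) :
    Integrable (fun q : ℝ × ℝ => gaussPDF1 σii q.1 * gaussPDF1 s (q.2 - m * q.1)) := by
  have hmeas : AEStronglyMeasurable
      (fun q : ℝ × ℝ => gaussPDF1 σii q.1 * gaussPDF1 s (q.2 - m * q.1)) (volume : Measure (ℝ × ℝ)) := by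
    apply Continuous.aestronglyMeasurable
    exact ((gauss1_cont σii).comp continuous_fst).mul
      ((gauss1_cont s).comp (continuous_snd.sub (continuous_const.mul continuous_fst)))
  rw [MeasureTheory.Measure.volume_eq_prod]
  rw [MeasureTheory.integrable_prod_iff]
  constructor
  · filter_upwards with x
    exact (((gauss1_integrable hs).comp_sub_right (m * x)).const_mul _)
  · have : ∀ x : ℝ, (∫ w : ℝ, ‖gaussPDF1 σii x * gaussPDF1 s (w - m * x)‖)
        = (∫ w : ℝ, gaussPDF1 s w) * gaussPDF1 σii x := by
      intro x
      have h1 : ∀ w : ℝ, ‖gaussPDF1 σii x * gaussPDF1 s (w - m * x)‖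
          = gaussPDF1 σii x * gaussPDF1 s (w - m * x) := by
        intro w
        rw [norm_of_nonneg (mul_nonneg (gauss1_nonneg _ _) (gauss1_nonneg _ _))]
      simp_rw [h1]
      rw [integral_const_mul, integral_sub_right_eq_self (μ := volume) (fun w => gaussPDF1 s w) (m*x)]
      ring
    simp_rw [this]
    exact (gauss1_integrable hii).const_mul _
  · rw [← MeasureTheory.Measure.volume_eq_prod]
    exact hmeas

lemma f_bound (x : ℝ) : |Real.sin x + Real.sin (2 * x)| ≤ 2 := by
  calc |Real.sin x + Real.sin (2 * x)| ≤ |Real.sin x| + |Real.sin (2 * x)| := abs_add_le _ _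
    _ ≤ 1 + 1 := add_le_add (abs_sin_le_one' x) (abs_sin_le_one' _)
    _ = 2 := by norm_num

theorem transformed_covariance_sin_plus_sin2
    (σii σjj σij : ℝ) (hii : 0 < σii) (hjj : 0 < σjj)
    (hd : 0 < σii * σjj - σij ^ 2) :
    transCov σii σjj σij (fun x => Real.sin x + Real.sin (2 * x))
        (fun x => Real.sin x + Real.sin (2 * x)) =
      Real.sinh (4 * σij) * Real.exp (-2 * (σii + σjj)) +
        Real.sinh (2 * σij) * Real.exp (-(2 * σii + σjj / 2)) +
        Real.sinh (2 * σij) * Real.exp (-(σii / 2 + 2 * σjj)) +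
        Real.sinh σij * Real.exp (-(σii + σjj) / 2) := by
  have hs : 0 < (σii * σjj - σij ^ 2) / σii := div_pos hd hii
  set s : ℝ := (σii * σjj - σij ^ 2) / σii with hs_def
  set m : ℝ := σij / σii with hm_def
  -- mean is zero
  have hmean : ∀ σ : ℝ, 0 < σ →
      transMean σ (fun x => Real.sin x + Real.sin (2 * x)) = 0 := by
    intro σ hσ
    unfold transMean
    have heq : ∀ x : ℝ, (Real.sin x + Real.sin (2 * x)) * gaussPDF1 σ x
        = Real.sin (1 * x) * gaussPDF1 σ x + Real.sin (2 * x) * gaussPDF1 σ x := by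
      intro x; rw [one_mul]; ring
    simp_rw [heq]
    rw [MeasureTheory.integral_add (integrable_sin_mul_gauss hσ 1) (integrable_sin_mul_gauss hσ 2),
      integral_sin_gauss hσ, integral_sin_gauss hσ, add_zero]
  -- integrability of the 2D integrand
  have hFint : Integrable (fun q : ℝ × ℝ =>
      (Real.sin q.1 + Real.sin (2 * q.1)) * (Real.sin q.2 + Real.sin (2 * q.2)) *
        gaussPDF2 σii σjj σij q.1 q.2) := by
    have hG := gauss2_prod_integrable (σii := σii) (s := s) (m := m) hii hs
    apply Integrable.mono (hG.const_mul 4)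
    · apply Continuous.aestronglyMeasurable
      unfold gaussPDF2
      fun_prop
    · filter_upwards with q
      rw [Real.norm_eq_abs, Real.norm_eq_abs, gauss2_factor hii hd, ← hs_def, ← hm_def]
      have hg : 0 ≤ gaussPDF1 σii q.1 * gaussPDF1 s (q.2 - m * q.1) :=
        mul_nonneg (gauss1_nonneg _ _) (gauss1_nonneg _ _)
      have h4 : |(Real.sin q.1 + Real.sin (2 * q.1)) * (Real.sin q.2 + Real.sin (2 * q.2))| ≤ 4 := by
        rw [abs_mul]
        calc |Real.sin q.1 + Real.sin (2 * q.1)| * |Real.sin q.2 + Real.sin (2 * q.2)|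
            ≤ 2 * 2 := mul_le_mul (f_bound _) (f_bound _) (abs_nonneg _) (by norm_num)
          _ = 4 := by norm_num
      rw [abs_mul, abs_of_nonneg hg]
      calc |(Real.sin q.1 + Real.sin (2 * q.1)) * (Real.sin q.2 + Real.sin (2 * q.2))| *
            (gaussPDF1 σii q.1 * gaussPDF1 s (q.2 - m * q.1))
          ≤ 4 * (gaussPDF1 σii q.1 * gaussPDF1 s (q.2 - m * q.1)) :=
            mul_le_mul_of_nonneg_right h4 hg
        _ ≤ |4 * (gaussPDF1 σii q.1 * gaussPDF1 s (q.2 - m * q.1))| := le_abs_self _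
  -- key exponential combination
  have hcomb : ∀ a b : ℝ, Real.exp (-b^2*s/2) *
        ((Real.exp (-(a - b*m)^2*σii/2) - Real.exp (-(a + b*m)^2*σii/2))/2)
      = Real.sinh (a*b*σij) * Real.exp (-(a^2*σii + b^2*σjj)/2) := by
    intro a b
    have h1 : -b^2*s/2 + -(a - b*m)^2*σii/2 = a*b*σij + -(a^2*σii + b^2*σjj)/2 := by
      rw [hs_def, hm_def]; field_simp; ring
    have h2 : -b^2*s/2 + -(a + b*m)^2*σii/2 = -(a*b*σij) + -(a^2*σii + b^2*σjj)/2 := by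
      rw [hs_def, hm_def]; field_simp; ring
    calc Real.exp (-b^2*s/2) * ((Real.exp (-(a - b*m)^2*σii/2) - Real.exp (-(a + b*m)^2*σii/2))/2)
        = (Real.exp (-b^2*s/2 + -(a - b*m)^2*σii/2) - Real.exp (-b^2*s/2 + -(a + b*m)^2*σii/2))/2 := by
          rw [Real.exp_add, Real.exp_add]; ring
      _ = (Real.exp (a*b*σij + -(a^2*σii + b^2*σjj)/2)
            - Real.exp (-(a*b*σij) + -(a^2*σii + b^2*σjj)/2))/2 := by rw [h1, h2]
      _ = Real.sinh (a*b*σij) * Real.exp (-(a^2*σii + b^2*σjj)/2) := by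
          rw [Real.sinh_eq, Real.exp_add, Real.exp_add]; ring
  -- the double integral
  have hdouble : (∫ q : ℝ × ℝ, (Real.sin q.1 + Real.sin (2 * q.1)) *
        (Real.sin q.2 + Real.sin (2 * q.2)) * gaussPDF2 σii σjj σij q.1 q.2)
      = Real.sinh (4 * σij) * Real.exp (-2 * (σii + σjj)) +
        Real.sinh (2 * σij) * Real.exp (-(2 * σii + σjj / 2)) +
        Real.sinh (2 * σij) * Real.exp (-(σii / 2 + 2 * σjj)) +
        Real.sinh σij * Real.exp (-(σii + σjj) / 2) := by
    rw [MeasureTheory.Measure.volume_eq_prod] at hFint ⊢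
    rw [MeasureTheory.integral_prod _ hFint]
    have hinner : ∀ x : ℝ, (∫ w : ℝ, (Real.sin x + Real.sin (2 * x)) *
          (Real.sin w + Real.sin (2 * w)) * gaussPDF2 σii σjj σij x w)
        = (Real.sin x + Real.sin (2 * x)) * gaussPDF1 σii x *
            (Real.sin (1 * (m * x)) * Real.exp (-1 ^ 2 * s / 2)
              + Real.sin (2 * (m * x)) * Real.exp (-2 ^ 2 * s / 2)) := by
      intro x
      have heq : ∀ w : ℝ, (Real.sin x + Real.sin (2 * x)) *
            (Real.sin w + Real.sin (2 * w)) * gaussPDF2 σii σjj σij x w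
          = ((Real.sin x + Real.sin (2 * x)) * gaussPDF1 σii x) *
              (Real.sin (1 * w) * gaussPDF1 s (w - m * x))
            + ((Real.sin x + Real.sin (2 * x)) * gaussPDF1 σii x) *
              (Real.sin (2 * w) * gaussPDF1 s (w - m * x)) := by
        intro w
        rw [gauss2_factor hii hd, ← hs_def, ← hm_def, one_mul]
        ring
      simp_rw [heq]
      rw [MeasureTheory.integral_add ((integrable_sin_shift_gauss hs 1 (m*x)).const_mul _)
        ((integrable_sin_shift_gauss hs 2 (m*x)).const_mul _), integral_const_mul,
        integral_const_mul, integral_sin_shift_gauss hs 1 (m*x), integral_sin_shift_gauss hs 2 (m*x)]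
      ring
    simp_rw [hinner]
    have houter : ∀ x : ℝ, (Real.sin x + Real.sin (2 * x)) * gaussPDF1 σii x *
          (Real.sin (1 * (m * x)) * Real.exp (-1 ^ 2 * s / 2)
            + Real.sin (2 * (m * x)) * Real.exp (-2 ^ 2 * s / 2))
        = Real.exp (-1 ^ 2 * s / 2) * (Real.sin (1 * x) * Real.sin ((1*m) * x) * gaussPDF1 σii x)
          + Real.exp (-2 ^ 2 * s / 2) * (Real.sin (1 * x) * Real.sin ((2*m) * x) * gaussPDF1 σii x)
          + Real.exp (-1 ^ 2 * s / 2) * (Real.sin (2 * x) * Real.sin ((1*m) * x) * gaussPDF1 σii x)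
          + Real.exp (-2 ^ 2 * s / 2) * (Real.sin (2 * x) * Real.sin ((2*m) * x) * gaussPDF1 σii x) := by
      intro x
      rw [show (1:ℝ) * (m * x) = (1*m) * x by ring, show (2:ℝ) * (m * x) = (2*m) * x by ring,
        one_mul]
      ring
    simp_rw [houter]
    have I11 : Integrable (fun x : ℝ => Real.exp (-1^2*s/2) *
        (Real.sin (1*x) * Real.sin ((1*m)*x) * gaussPDF1 σii x)) volume :=
      (integrable_sin_sin_gauss hii 1 (1*m)).const_mul _
    have I12 : Integrable (fun x : ℝ => Real.exp (-2^2*s/2) *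
        (Real.sin (1*x) * Real.sin ((2*m)*x) * gaussPDF1 σii x)) volume :=
      (integrable_sin_sin_gauss hii 1 (2*m)).const_mul _
    have I21 : Integrable (fun x : ℝ => Real.exp (-1^2*s/2) *
        (Real.sin (2*x) * Real.sin ((1*m)*x) * gaussPDF1 σii x)) volume :=
      (integrable_sin_sin_gauss hii 2 (1*m)).const_mul _
    have I22 : Integrable (fun x : ℝ => Real.exp (-2^2*s/2) *
        (Real.sin (2*x) * Real.sin ((2*m)*x) * gaussPDF1 σii x)) volume :=
      (integrable_sin_sin_gauss hii 2 (2*m)).const_mul _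
    have split : (∫ x : ℝ,
          (Real.exp (-1^2*s/2) * (Real.sin (1*x) * Real.sin ((1*m)*x) * gaussPDF1 σii x)
            + Real.exp (-2^2*s/2) * (Real.sin (1*x) * Real.sin ((2*m)*x) * gaussPDF1 σii x)
            + Real.exp (-1^2*s/2) * (Real.sin (2*x) * Real.sin ((1*m)*x) * gaussPDF1 σii x)
            + Real.exp (-2^2*s/2) * (Real.sin (2*x) * Real.sin ((2*m)*x) * gaussPDF1 σii x)))
        = (∫ x : ℝ, Real.exp (-1^2*s/2) * (Real.sin (1*x) * Real.sin ((1*m)*x) * gaussPDF1 σii x))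
          + (∫ x : ℝ, Real.exp (-2^2*s/2) * (Real.sin (1*x) * Real.sin ((2*m)*x) * gaussPDF1 σii x))
          + (∫ x : ℝ, Real.exp (-1^2*s/2) * (Real.sin (2*x) * Real.sin ((1*m)*x) * gaussPDF1 σii x))
          + (∫ x : ℝ, Real.exp (-2^2*s/2) * (Real.sin (2*x) * Real.sin ((2*m)*x) * gaussPDF1 σii x)) := by
      have e1 := MeasureTheory.integral_add ((I11.add I12).add I21) I22
      have e2 := MeasureTheory.integral_add (I11.add I12) I21
      have e3 := MeasureTheory.integral_add I11 I12
      simp only [Pi.add_apply] at e1 e2 e3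
      rw [e1, e2, e3]
    rw [split,
      integral_const_mul, integral_const_mul, integral_const_mul, integral_const_mul,
      integral_sin_mul_sin_gauss hii 1 (1*m), integral_sin_mul_sin_gauss hii 1 (2*m),
      integral_sin_mul_sin_gauss hii 2 (1*m), integral_sin_mul_sin_gauss hii 2 (2*m)]
    have c11 := hcomb 1 1
    have c12 := hcomb 1 2
    have c21 := hcomb 2 1
    have c22 := hcomb 2 2
    rw [show (1:ℝ)*1*σij = σij by ring] at c11
    rw [show (1:ℝ)*2*σij = 2*σij by ring] at c12
    rw [show (2:ℝ)*1*σij = 2*σij by ring] at c21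
    rw [show (2:ℝ)*2*σij = 4*σij by ring] at c22
    rw [show -((1:ℝ)^2*σii + 1^2*σjj)/2 = -(σii+σjj)/2 by ring] at c11
    rw [show -((1:ℝ)^2*σii + 2^2*σjj)/2 = -(σii/2 + 2*σjj) by ring] at c12
    rw [show -((2:ℝ)^2*σii + 1^2*σjj)/2 = -(2*σii + σjj/2) by ring] at c21
    rw [show -((2:ℝ)^2*σii + 2^2*σjj)/2 = -2*(σii+σjj) by ring] at c22
    have e11 : Real.exp (-1^2*s/2) * ((Real.exp (-(1 - 1*m)^2*σii/2) - Real.exp (-(1 + 1*m)^2*σii/2))/2)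
        = Real.sinh σij * Real.exp (-(σii+σjj)/2) := by
      rw [← c11]
    have e12 : Real.exp (-2^2*s/2) * ((Real.exp (-(1 - 2*m)^2*σii/2) - Real.exp (-(1 + 2*m)^2*σii/2))/2)
        = Real.sinh (2*σij) * Real.exp (-(σii/2 + 2*σjj)) := by
      rw [← c12]
    have e21 : Real.exp (-1^2*s/2) * ((Real.exp (-(2 - 1*m)^2*σii/2) - Real.exp (-(2 + 1*m)^2*σii/2))/2)
        = Real.sinh (2*σij) * Real.exp (-(2*σii + σjj/2)) := by
      rw [← c21]
    have e22 : Real.exp (-2^2*s/2) * ((Real.exp (-(2 - 2*m)^2*σii/2) - Real.exp (-(2 + 2*m)^2*σii/2))/2)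
        = Real.sinh (4*σij) * Real.exp (-2*(σii+σjj)) := by
      rw [← c22]
    rw [e11, e12, e21, e22]
    ring
  unfold transCov
  rw [hmean σii hii, hmean σjj hjj, hdouble]
  ring
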